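/- Let k ≥ 1 be an integer and let A be a symmetric n×n matrix with entries in {0,1} with 2k ≤ n, and eigenvalues λ_1 ≥ ⋯ ≥ λ_n. Then λ_{k+1}(A) − λ_{n−k+1}(A) ≤ n/√(2k). -/

import Mathlib

open scoped InnerProductSpace

noncomputable section
namespace SpreadAux

lemma frob_bound {n : ℕ} (C : Matrix (Fin n) (Fin n) ℝ) {ι : Type*} [Fintype ι]
    {F : ι → EuclideanSpace ℝ (Fin n)} (hF : Orthonormal ℝ F) :
    ∑ l, ⟪F l, Matrix.toEuclideanLin C (F l)⟫_ℝ ^ 2 ≤ ∑ r, ∑ c, (C r c) ^ 2 := by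
  set TC := Matrix.toEuclideanLin C with hTC
  have row_inner : ∀ (r : Fin n) (x : EuclideanSpace ℝ (Fin n)),
      (TC x) r = ⟪(WithLp.equiv 2 (Fin n → ℝ)).symm (fun c => C r c), x⟫_ℝ := by
    intro r x
    simp [hTC, Matrix.toEuclideanLin_apply, Matrix.mulVec, dotProduct,
      PiLp.inner_apply]
    exact Finset.sum_congr rfl fun _ _ => mul_comm _ _
  have step1 : ∀ l, ⟪F l, TC (F l)⟫_ℝ ^ 2 ≤ ⟪TC (F l), TC (F l)⟫_ℝ := by
    intro l
    have hx : ⟪F l, F l⟫_ℝ = 1 := by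
      have := hF.1 l
      rw [real_inner_self_eq_norm_sq, this]; norm_num
    have := real_inner_mul_inner_self_le (F l) (TC (F l))
    rw [hx, one_mul] at this
    nlinarith [this]
  calc ∑ l, ⟪F l, TC (F l)⟫_ℝ ^ 2 ≤ ∑ l, ⟪TC (F l), TC (F l)⟫_ℝ :=
        Finset.sum_le_sum fun l _ => step1 l
    _ = ∑ l, ∑ r, ⟪(WithLp.equiv 2 (Fin n → ℝ)).symm (fun c => C r c), F l⟫_ℝ ^ 2 := by
        refine Finset.sum_congr rfl fun l _ => ?_
        rw [PiLp.inner_apply]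
        refine Finset.sum_congr rfl fun r _ => ?_
        simp [row_inner r (F l), pow_two]
    _ = ∑ r, ∑ l, ⟪(WithLp.equiv 2 (Fin n → ℝ)).symm (fun c => C r c), F l⟫_ℝ ^ 2 :=
        Finset.sum_comm
    _ ≤ ∑ r, ∑ c, (C r c) ^ 2 := by
        refine Finset.sum_le_sum fun r _ => ?_
        have hb := hF.sum_inner_products_le (𝕜 := ℝ)
          ((WithLp.equiv 2 (Fin n → ℝ)).symm (fun c => C r c)) (s := Finset.univ)
        calc ∑ l, ⟪(WithLp.equiv 2 (Fin n → ℝ)).symm (fun c => C r c), F l⟫_ℝ ^ 2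
            = ∑ l, ‖⟪F l, (WithLp.equiv 2 (Fin n → ℝ)).symm (fun c => C r c)⟫_ℝ‖ ^ 2 := by
              refine Finset.sum_congr rfl fun l _ => ?_
              rw [real_inner_comm, Real.norm_eq_abs, sq_abs]
          _ ≤ ‖(WithLp.equiv 2 (Fin n → ℝ)).symm (fun c => C r c)‖ ^ 2 := hb
          _ = ∑ c, (C r c) ^ 2 := by
              rw [← real_inner_self_eq_norm_sq, PiLp.inner_apply]
              refine Finset.sum_congr rfl fun c _ => ?_
              simp [pow_two]

variable {n : ℕ} {A : Matrix (Fin n) (Fin n) ℝ}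

lemma TA_eigen (hA : A.IsHermitian) (i : Fin n) :
    Matrix.toEuclideanLin A (hA.eigenvectorBasis i)
      = hA.eigenvalues i • hA.eigenvectorBasis i := by
  have h := hA.mulVec_eigenvectorBasis i
  apply (WithLp.equiv 2 (Fin n → ℝ)).injective
  simp [Matrix.toEuclideanLin_apply]
  ext j
  exact congrFun h j

lemma ones_smul (y : EuclideanSpace ℝ (Fin n)) :
    Matrix.toEuclideanLin (Matrix.of fun _ _ => (1:ℝ)) y
      = ⟪(WithLp.equiv 2 (Fin n → ℝ)).symm (fun _ => 1), y⟫_ℝ •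
          ((WithLp.equiv 2 (Fin n → ℝ)).symm (fun _ => 1)) := by
  apply (WithLp.equiv 2 (Fin n → ℝ)).injective
  ext j
  simp [Matrix.toEuclideanLin_apply, Matrix.mulVec, dotProduct, PiLp.inner_apply]

lemma quad_expand (hA : A.IsHermitian) (x : EuclideanSpace ℝ (Fin n)) :
    ⟪x, Matrix.toEuclideanLin A x⟫_ℝ
      = ∑ i, hA.eigenvalues i * ⟪hA.eigenvectorBasis i, x⟫_ℝ ^ 2 := by
  have hsym := Matrix.isHermitian_iff_isSymmetric.1 hA
  rw [← (hA.eigenvectorBasis).sum_inner_mul_inner x (Matrix.toEuclideanLin A x)]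
  refine Finset.sum_congr rfl fun i _ => ?_
  have h1 : ⟪hA.eigenvectorBasis i, Matrix.toEuclideanLin A x⟫_ℝ
      = hA.eigenvalues i * ⟪hA.eigenvectorBasis i, x⟫_ℝ := by
    rw [← hsym, TA_eigen hA i, real_inner_smul_left]
  rw [h1, real_inner_comm x]
  ring

lemma parseval (hA : A.IsHermitian) (x : EuclideanSpace ℝ (Fin n)) :
    ⟪x, x⟫_ℝ = ∑ i, ⟪hA.eigenvectorBasis i, x⟫_ℝ ^ 2 := by
  rw [← (hA.eigenvectorBasis).sum_inner_mul_inner x x]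
  refine Finset.sum_congr rfl fun i _ => ?_
  rw [real_inner_comm x]; ring

lemma span_orth (hA : A.IsHermitian) (S : Finset (Fin n)) {j : Fin n} (hj : j ∉ S)
    {x : EuclideanSpace ℝ (Fin n)}
    (hx : x ∈ Submodule.span ℝ (Set.range fun i : {y // y ∈ S} => hA.eigenvectorBasis i)) :
    ⟪hA.eigenvectorBasis j, x⟫_ℝ = 0 := by
  have hle : Submodule.span ℝ (Set.range fun i : {y // y ∈ S} => hA.eigenvectorBasis i)
      ≤ (ℝ ∙ (hA.eigenvectorBasis j))ᗮ := by
    rw [Submodule.span_le]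
    rintro - ⟨i, rfl⟩
    rw [SetLike.mem_coe, Submodule.mem_orthogonal_singleton_iff_inner_right]
    exact (hA.eigenvectorBasis).orthonormal.2 (fun h => hj (h ▸ i.2))
  exact Submodule.mem_orthogonal_singleton_iff_inner_right.1 (hle hx)

lemma quad_lower (hA : A.IsHermitian) (S : Finset (Fin n)) (α : ℝ)
    (hS : ∀ i ∈ S, α ≤ hA.eigenvalues i)
    {x : EuclideanSpace ℝ (Fin n)}
    (hx : x ∈ Submodule.span ℝ (Set.range fun i : {y // y ∈ S} => hA.eigenvectorBasis i))
    (hx1 : ⟪x, x⟫_ℝ = 1) :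
    α ≤ ⟪x, Matrix.toEuclideanLin A x⟫_ℝ := by
  rw [quad_expand hA x]
  have h1 : α = ∑ i, α * ⟪hA.eigenvectorBasis i, x⟫_ℝ ^ 2 := by
    rw [← Finset.mul_sum, ← parseval hA x, hx1, mul_one]
  rw [h1]
  refine Finset.sum_le_sum fun i _ => ?_
  by_cases hi : i ∈ S
  · exact mul_le_mul_of_nonneg_right (hS i hi) (sq_nonneg _)
  · rw [span_orth hA S hi hx]
    simp

set_option maxHeartbeats 2000000 in
lemma core (n k : ℕ) (hk : 1 ≤ k) (hn : 2 * k ≤ n)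
    (A : Matrix (Fin n) (Fin n) ℝ) (hA : A.IsHermitian)
    (hA01 : ∀ a b, A a b = 0 ∨ A a b = 1)
    (α γ : ℝ) (S T : Finset (Fin n)) (hST : Disjoint S T)
    (hScard : k + 1 ≤ S.card) (hTcard : k ≤ T.card)
    (hSev : ∀ i ∈ S, α ≤ hA.eigenvalues i) (hTev : ∀ i ∈ T, hA.eigenvalues i ≤ γ) :
    α - γ ≤ (n : ℝ) / Real.sqrt (2 * k) := by
  classical
  obtain ⟨S', hS'sub, hS'card⟩ := Finset.exists_subset_card_eq hScard
  obtain ⟨T', hT'sub, hT'card⟩ := Finset.exists_subset_card_eq hTcard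
  have hd' : Disjoint S' T' := hST.mono hS'sub hT'sub
  set u := hA.eigenvectorBasis with hu
  set ev := hA.eigenvalues with hev
  set o : EuclideanSpace ℝ (Fin n) := (WithLp.equiv 2 (Fin n → ℝ)).symm (fun _ => 1) with ho
  set V : Submodule ℝ (EuclideanSpace ℝ (Fin n)) :=
    Submodule.span ℝ (Set.range fun i : {y // y ∈ S'} => u i) with hV
  set W : Submodule ℝ (EuclideanSpace ℝ (Fin n)) := (ℝ ∙ o)ᗮ with hW
  have hne : o ≠ 0 := by
    intro h
    have h0 := congrFun (congrArg (⇑(WithLp.equiv 2 (Fin n → ℝ))) h) ⟨0, by omega⟩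
    simpa [ho] using h0
  have hSevS' : ∀ i ∈ S', α ≤ hA.eigenvalues i := fun i hi => hSev i (hS'sub hi)
  have hVrank : Module.finrank ℝ V = k + 1 := by
    have hli : LinearIndependent ℝ (fun i : {y // y ∈ S'} => u i) :=
      (u.orthonormal.comp _ Subtype.val_injective).linearIndependent
    rw [hV, finrank_span_eq_card hli, Fintype.card_coe, hS'card]
  have hWrank : Module.finrank ℝ W = n - 1 := by
    have h1 := Submodule.finrank_add_finrank_orthogonal (K := (ℝ ∙ o))
    rw [← hW, finrank_span_singleton hne, finrank_euclideanSpace_fin] at h1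
    omega
  have hKrank : k ≤ Module.finrank ℝ ↥(V ⊓ W) := by
    have h1 := Submodule.finrank_sup_add_finrank_inf_eq V W
    have h2 : Module.finrank ℝ ↥(V ⊔ W) ≤ n := by
      simpa [finrank_euclideanSpace_fin] using (V ⊔ W).finrank_le
    omega
  set bK := stdOrthonormalBasis ℝ ↥(V ⊓ W) with hbK
  set w : Fin k → EuclideanSpace ℝ (Fin n) :=
    fun l => (bK ⟨l.val, lt_of_lt_of_le l.isLt hKrank⟩ : EuclideanSpace ℝ (Fin n)) with hw
  set t : Fin k → Fin n :=
    fun l => ((T'.equivFin.symm ⟨l.val, by rw [hT'card]; exact l.isLt⟩ : {y // y ∈ T'}) : Fin n)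
    with htdef
  have htT' : ∀ l, t l ∈ T' := fun l => (T'.equivFin.symm _).2
  have htinj : Function.Injective t := by
    intro a b h
    have h2 := T'.equivFin.symm.injective (Subtype.val_injective h)
    have h3 : (a : ℕ) = (b : ℕ) := by simpa using congrArg Fin.val h2
    exact Fin.val_injective h3
  have hwK : ∀ l, w l ∈ V ⊓ W := fun l => (bK _).2
  -- orthonormality of the combined family
  set F : (Fin k ⊕ Fin k) → EuclideanSpace ℝ (Fin n) := Sum.elim w (fun l => u (t l)) with hF
  have hFon : Orthonormal ℝ F := by
    constructor
    · rintro (l | l)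
      · simp only [hF, hw, Sum.elim_inl]
        exact bK.orthonormal.1 _
      · exact u.orthonormal.1 _
    · rintro (l | l) (m | m) hne'
      · have hlm : l ≠ m := fun h => hne' (by rw [h])
        have : ⟪bK ⟨l.val, lt_of_lt_of_le l.isLt hKrank⟩,
            bK ⟨m.val, lt_of_lt_of_le m.isLt hKrank⟩⟫_ℝ = 0 := by
          apply bK.orthonormal.2
          simp only [ne_eq, Fin.mk.injEq]
          exact fun h => hlm (Fin.val_injective h)
        simpa [hF, hw, Submodule.coe_inner] using this
      · have hmS' : t m ∉ S' := Finset.disjoint_right.1 hd' (htT' m)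
        have := span_orth hA S' hmS' ((hwK l).1)
        rw [real_inner_comm] at this
        simpa [hF] using this
      · have hlS' : t l ∉ S' := Finset.disjoint_right.1 hd' (htT' l)
        simpa [hF] using span_orth hA S' hlS' ((hwK m).1)
      · have hlm : t l ≠ t m := fun h => hne' (by rw [htinj h])
        simpa [hF] using u.orthonormal.2 hlm
  -- the ±1 matrix
  set C : Matrix (Fin n) (Fin n) ℝ := (2 : ℝ) • A - Matrix.of (fun _ _ => 1) with hC
  have hCquad : ∀ x, ⟪x, Matrix.toEuclideanLin C x⟫_ℝ
      = 2 * ⟪x, Matrix.toEuclideanLin A x⟫_ℝ - ⟪o, x⟫_ℝ ^ 2 := by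
    intro x
    rw [hC, map_sub, map_smul, LinearMap.sub_apply, LinearMap.smul_apply,
      inner_sub_right, real_inner_smul_right, ones_smul x, real_inner_smul_right]
    rw [real_inner_comm x o]
    rw [← ho]
    ring_nf
  -- Rayleigh quotient bounds
  have hplus : ∀ l : Fin k, 2 * α ≤ ⟪F (Sum.inl l), Matrix.toEuclideanLin C (F (Sum.inl l))⟫_ℝ := by
    intro l
    have hx1 : ⟪w l, w l⟫_ℝ = 1 := by
      have h1 := hFon.1 (Sum.inl l)
      simp only [hF, Sum.elim_inl] at h1
      rw [real_inner_self_eq_norm_sq, h1]; norm_num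
    have hoxw : ⟪o, w l⟫_ℝ = 0 :=
      Submodule.mem_orthogonal_singleton_iff_inner_right.1 (hwK l).2
    have hq := quad_lower hA S' α hSevS' (hwK l).1 hx1
    simp only [hF, Sum.elim_inl]
    rw [hCquad (w l), hoxw]
    nlinarith [hq]
  have hminus : ∀ l : Fin k,
      ⟪F (Sum.inr l), Matrix.toEuclideanLin C (F (Sum.inr l))⟫_ℝ ≤ 2 * γ := by
    intro l
    have hx1 : ⟪u (t l), u (t l)⟫_ℝ = 1 := by
      rw [real_inner_self_eq_norm_sq, u.orthonormal.1 (t l)]; norm_num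
    have hqA : ⟪u (t l), Matrix.toEuclideanLin A (u (t l))⟫_ℝ = ev (t l) := by
      rw [TA_eigen hA (t l), real_inner_smul_right, hx1, mul_one]
    have hevt : ev (t l) ≤ γ := hTev _ (hT'sub (htT' l))
    simp only [hF, Sum.elim_inr]
    rw [hCquad (u (t l)), hqA]
    nlinarith [sq_nonneg (⟪o, u (t l)⟫_ℝ)]
  -- Frobenius bound
  have hfrob := frob_bound C hFon
  have hCsq : ∀ r c, (C r c) ^ 2 = 1 := by
    intro r c
    rcases hA01 r c with h | h <;> simp [hC, h] <;> norm_num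
  have hRHS : (∑ r, ∑ c, (C r c) ^ 2) = (n : ℝ) ^ 2 := by
    simp only [hCsq]
    simp [Finset.sum_const, Finset.card_univ, pow_two]
  rw [hRHS] at hfrob
  -- lower bound the sum
  set a := max α 0 with ha
  set g := min γ 0 with hg
  have hlower : (k : ℝ) * (4 * a ^ 2) + (k : ℝ) * (4 * g ^ 2)
      ≤ ∑ li, ⟪F li, Matrix.toEuclideanLin C (F li)⟫_ℝ ^ 2 := by
    rw [Fintype.sum_sum_type]
    have h1 : (k : ℝ) * (4 * a ^ 2)
        ≤ ∑ l : Fin k, ⟪F (Sum.inl l), Matrix.toEuclideanLin C (F (Sum.inl l))⟫_ℝ ^ 2 := by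
      calc (k : ℝ) * (4 * a ^ 2) = ∑ _l : Fin k, 4 * a ^ 2 := by
            simp [Finset.sum_const, Finset.card_univ]
        _ ≤ _ := by
            refine Finset.sum_le_sum fun l _ => ?_
            rcases le_or_gt α 0 with h | h
            · have : a = 0 := max_eq_right h
              rw [this]
              simpa using sq_nonneg _
            · have haα : a = α := max_eq_left h.le
              have := hplus l
              rw [haα]
              nlinarith [this]
    have h2 : (k : ℝ) * (4 * g ^ 2)
        ≤ ∑ l : Fin k, ⟪F (Sum.inr l), Matrix.toEuclideanLin C (F (Sum.inr l))⟫_ℝ ^ 2 := by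
      calc (k : ℝ) * (4 * g ^ 2) = ∑ _l : Fin k, 4 * g ^ 2 := by
            simp [Finset.sum_const, Finset.card_univ]
        _ ≤ _ := by
            refine Finset.sum_le_sum fun l _ => ?_
            rcases le_or_gt 0 γ with h | h
            · have : g = 0 := min_eq_right h
              rw [this]
              simpa using sq_nonneg _
            · have hgγ : g = γ := min_eq_left h.le
              have := hminus l
              rw [hgγ]
              nlinarith [this]
    exact add_le_add h1 h2
  have hmain : 4 * (k : ℝ) * (a ^ 2 + g ^ 2) ≤ (n : ℝ) ^ 2 := by nlinarith [le_trans hlower hfrob]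
  -- final arithmetic
  have hag : α - γ ≤ a - g := sub_le_sub (le_max_left _ _) (min_le_left _ _)
  have hagnn : 0 ≤ a - g := sub_nonneg.2 (le_trans (min_le_right _ _) (le_max_right _ _))
  have hk0 : (0 : ℝ) < 2 * k := by positivity
  have hsqrtpos : 0 < Real.sqrt (2 * k) := Real.sqrt_pos.2 hk0
  refine le_trans hag ?_
  rw [le_div_iff₀ hsqrtpos]
  have hsq : ((a - g) * Real.sqrt (2 * k)) ^ 2 ≤ (n : ℝ) ^ 2 := by
    rw [mul_pow, Real.sq_sqrt hk0.le]
    nlinarith [sq_nonneg (a + g), hmain]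
  have h1 := Real.sqrt_le_sqrt hsq
  rwa [Real.sqrt_sq (by positivity), Real.sqrt_sq (by positivity)] at h1

end SpreadAux
end

/-- For an integer `k ≥ 1` and a symmetric `n × n` `(0,1)`-matrix `A` with
`2k ≤ n` and eigenvalues `μ` in nonincreasing order,
`λ_{k+1}(A) - λ_{n-k+1}(A) ≤ n / √(2k)`. -/
theorem spread_k_kminus1_upper_bound (n k : ℕ) (hk : 1 ≤ k) (hn : 2 * k ≤ n)
    (A : Matrix (Fin n) (Fin n) ℝ) (hA : A.IsHermitian)
    (hA01 : ∀ a b, A a b = 0 ∨ A a b = 1)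
    (μ : Fin n → ℝ) (hmono : Antitone μ)
    (hperm : Finset.univ.val.map μ = Finset.univ.val.map hA.eigenvalues) :
    μ ⟨k, by omega⟩ - μ ⟨n - k, by omega⟩ ≤ (n : ℝ) / Real.sqrt (2 * (k : ℝ)) := by
  classical
  set αi : Fin n := ⟨k, by omega⟩ with hαi
  set γi : Fin n := ⟨n - k, by omega⟩ with hγi
  have hRHS : ((n : ℝ) / Real.sqrt (2 * (k : ℝ))) = (n : ℝ) / Real.sqrt (2 * k) := by norm_num
  have hRHSnn : (0:ℝ) ≤ (n : ℝ) / Real.sqrt (2 * (k : ℝ)) := by positivity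
  rcases le_or_gt (μ αi) (μ γi) with hle | hlt
  · linarith
  have hcount : ∀ (p : ℝ → Prop) [DecidablePred p],
      (Finset.univ.filter fun i => p (μ i)).card
        = (Finset.univ.filter fun i => p (hA.eigenvalues i)).card := by
    intro p hp
    have h := congrArg (Multiset.countP p) hperm
    rw [Multiset.countP_map, Multiset.countP_map] at h
    simpa [Finset.card, Finset.filter] using h
  set S := Finset.univ.filter (fun i => μ αi ≤ hA.eigenvalues i) with hS
  set T := Finset.univ.filter (fun i => hA.eigenvalues i ≤ μ γi) with hT
  have hScard : k + 1 ≤ S.card := by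
    rw [hS, ← hcount (fun x => μ αi ≤ x)]
    have h2 : (Finset.univ : Finset (Fin (k+1))).card
        ≤ (Finset.univ.filter fun i => μ αi ≤ μ i).card := by
      apply Finset.card_le_card_of_injOn (fun i => (⟨i.val, by omega⟩ : Fin n))
      · intro i _
        refine Finset.mem_filter.2 ⟨Finset.mem_univ _, ?_⟩
        apply hmono
        rw [hαi, Fin.le_def]
        exact Nat.lt_succ_iff.1 i.isLt
      · intro a _ b _ hab
        have : (a : ℕ) = b := by simpa using congrArg Fin.val hab
        exact Fin.val_injective this
    simpa using h2
  have hTcard : k ≤ T.card := by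
    rw [hT, ← hcount (fun x => x ≤ μ γi)]
    have h2 : (Finset.univ : Finset (Fin k)).card
        ≤ (Finset.univ.filter fun i => μ i ≤ μ γi).card := by
      apply Finset.card_le_card_of_injOn (fun i => (⟨n - k + i.val, by omega⟩ : Fin n))
      · intro i _
        refine Finset.mem_filter.2 ⟨Finset.mem_univ _, ?_⟩
        apply hmono
        rw [hγi, Fin.mk_le_mk]
        omega
      · intro a _ b _ hab
        have : (a : ℕ) = b := by simpa using congrArg Fin.val hab
        exact Fin.val_injective this
    simpa using h2
  have hST : Disjoint S T := by
    rw [Finset.disjoint_left]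
    intro i hiS hiT
    rw [hS, Finset.mem_filter] at hiS
    rw [hT, Finset.mem_filter] at hiT
    linarith [hiS.2, hiT.2]
  have := SpreadAux.core n k hk hn A hA hA01 (μ αi) (μ γi) S T hST hScard hTcard
    (fun i hi => (Finset.mem_filter.1 hi).2) (fun i hi => (Finset.mem_filter.1 hi).2)
  rw [hRHS]
  exact this
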